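/- If the bipartite graph B has a Hamiltonian cycle, then the graph G constructed from B by the reduction has a Hamiltonian cycle, obtained by replacing each occurrence of consecutive vertices m_i, n_j, m_k on the cycle in B by the sequence X_i, A_{ij}, Y_j, A_{hj}, Z_j, A_{kj}, X_k when d(n_j)=3 (with m_h the third neighbor of n_j), and by X_i, A_{ij}, Y_j, A_{kj}, X_k when d(n_j)=2. -/

import Mathlib

/-- The vertex type of the graph `G` constructed from the bipartite graph
`B = (M, N, E)` (with `E i j` meaning `m_i n_j ∈ E`): the vertices `X_i`, `Y_j`,
`Z_j` (only for `j` with `d(n_j) = 3`) and `A_{ij}` (only for edges `m_i n_j`). -/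
def Vtx (r : ℕ) (E : Fin r → Fin r → Prop) : Type :=
  {v : Fin r ⊕ Fin r ⊕ Fin r ⊕ Fin r × Fin r //
    match v with
    | Sum.inl _ => True
    | Sum.inr (Sum.inl _) => True
    | Sum.inr (Sum.inr (Sum.inl j)) => {i : Fin r | E i j}.ncard = 3
    | Sum.inr (Sum.inr (Sum.inr (i, j))) => E i j}

/-- The vertex `X_i`. -/
def Xv {r : ℕ} {E : Fin r → Fin r → Prop} (i : Fin r) : Vtx r E :=
  ⟨Sum.inl i, trivial⟩

/-- The vertex `Y_j`. -/
def Yv {r : ℕ} {E : Fin r → Fin r → Prop} (j : Fin r) : Vtx r E :=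
  ⟨Sum.inr (Sum.inl j), trivial⟩

/-- The vertex `Z_j`, present when `d(n_j) = 3`. -/
def Zv {r : ℕ} {E : Fin r → Fin r → Prop} (j : Fin r)
    (hj : {i : Fin r | E i j}.ncard = 3) : Vtx r E :=
  ⟨Sum.inr (Sum.inr (Sum.inl j)), hj⟩

/-- The vertex `A_{ij}`, present when `m_i n_j ∈ E`. -/
def Av {r : ℕ} {E : Fin r → Fin r → Prop} (i j : Fin r) (h : E i j) : Vtx r E :=
  ⟨Sum.inr (Sum.inr (Sum.inr (i, j))), h⟩

/-- Membership in the clique `K_s = {X_s} ∪ {A_{ij} : m_i n_j ∈ E, i ≤ s}`. -/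
def inK {r : ℕ} {E : Fin r → Fin r → Prop} (s : Fin r) (v : Vtx r E) : Prop :=
  match v.val with
  | Sum.inl s' => s' = s
  | Sum.inr (Sum.inr (Sum.inr (i, _))) => i ≤ s
  | _ => False

/-- Membership in the clique `K'_j = {Y_j} ∪ {A_{ij} : m_i n_j ∈ E}`. -/
def inK' {r : ℕ} {E : Fin r → Fin r → Prop} (j : Fin r) (v : Vtx r E) : Prop :=
  match v.val with
  | Sum.inr (Sum.inl j') => j' = j
  | Sum.inr (Sum.inr (Sum.inr (_, j'))) => j' = j
  | _ => False

/-- Membership in the clique `K''_j = {Z_j} ∪ {A_{ij} : m_i n_j ∈ E}`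
(a clique of `G` only when `d(n_j) = 3`). -/
def inK'' {r : ℕ} {E : Fin r → Fin r → Prop} (j : Fin r) (v : Vtx r E) : Prop :=
  match v.val with
  | Sum.inr (Sum.inr (Sum.inl j')) => j' = j
  | Sum.inr (Sum.inr (Sum.inr (_, j'))) => j' = j
  | _ => False

/-- The graph `G` of the reduction: two distinct vertices are adjacent iff they
lie in a common clique `K_s`, `K'_j`, or `K''_j` (the latter for `d(n_j) = 3`). -/
def Gr (r : ℕ) (E : Fin r → Fin r → Prop) : SimpleGraph (Vtx r E) :=
  SimpleGraph.fromRel (fun u v =>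
    (∃ s, inK s u ∧ inK s v) ∨ (∃ j, inK' j u ∧ inK' j v) ∨
      (∃ j, {i : Fin r | E i j}.ncard = 3 ∧ inK'' j u ∧ inK'' j v))

instance {r : ℕ} {E : Fin r → Fin r → Prop} : DecidableEq (Vtx r E) := by
  unfold Vtx; infer_instance

/-- The bipartite graph `B = (M, N, E)` with `M = {m_1, …, m_r}` (left) and
`N = {n_1, …, n_r}` (right): `m_i` is adjacent to `n_j` iff `E i j`. -/
def Bip (r : ℕ) (E : Fin r → Fin r → Prop) : SimpleGraph (Fin r ⊕ Fin r) :=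
  SimpleGraph.fromRel (fun u v =>
    match u, v with
    | Sum.inl i, Sum.inr j => E i j
    | _, _ => False)


variable {V : Type*} {G : SimpleGraph V}

/-- Build a walk along a chain of adjacent vertices. -/
def walkOfChain : ∀ (a : V) (l : List V) (b : V),
    List.Chain' G.Adj (a :: (l ++ [b])) → G.Walk a b
  | _, [], _, h => SimpleGraph.Walk.cons (List.isChain_cons_cons.mp h).1 SimpleGraph.Walk.nil
  | _, c :: l, b, h => SimpleGraph.Walk.cons (List.isChain_cons_cons.mp h).1
      (walkOfChain c l b (List.isChain_cons_cons.mp h).2)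

@[simp] lemma walkOfChain_support (a : V) (l : List V) (b : V) (h) :
    (walkOfChain a l b h : G.Walk a b).support = a :: (l ++ [b]) := by
  induction l generalizing a with
  | nil => simp [walkOfChain]
  | cons c l ih => simp [walkOfChain]; exact ih c _

lemma walkOfChain_edge_end (a : V) (l : List V) (b : V) (h) (hb : b ∉ a :: l)
    {u : V} (hu : s(u, b) ∈ (walkOfChain a l b h : G.Walk a b).edges) :
    u = (a :: l).getLast (by simp) := by
  induction l generalizing a with
  | nil =>
    simp only [walkOfChain, SimpleGraph.Walk.edges_cons, SimpleGraph.Walk.edges_nil,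
      List.mem_singleton] at hu
    rcases Sym2.eq_iff.mp hu with ⟨h1, _⟩ | ⟨_, h2⟩
    · simpa using h1
    · exfalso; simp at hb; exact hb h2
  | cons c l ih =>
    simp only [walkOfChain, SimpleGraph.Walk.edges_cons, List.mem_cons] at hu
    simp only [List.mem_cons, not_or] at hb
    rcases hu with hu | hu
    · exfalso
      rcases Sym2.eq_iff.mp hu with ⟨_, h2⟩ | ⟨_, h2⟩
      · exact hb.2.1 h2
      · exact hb.1 h2
    · have := ih c _ (by simp; tauto) hu
      rw [this]
      exact (List.getLast_cons (by simp)).symm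

lemma ham_of_list [DecidableEq V] (a c : V) (l : List V)
    (hnd : (a :: c :: l).Nodup) (hall : ∀ v, v ∈ a :: c :: l) (hl : l ≠ [])
    (hch : List.Chain' G.Adj (a :: c :: (l ++ [a]))) :
    ∃ (b : V) (q : G.Walk b b), q.IsHamiltonianCycle := by
  have hac : G.Adj a c := (List.isChain_cons_cons.mp hch).1
  set q : G.Walk c a := walkOfChain c l a (List.isChain_cons_cons.mp hch).2 with hq
  have hqs : q.support = c :: (l ++ [a]) := walkOfChain_support _ _ _ _
  have hanotin : a ∉ c :: l := (List.nodup_cons.mp hnd).1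
  have hcl : (c :: l).Nodup := (List.nodup_cons.mp hnd).2
  have hqpath : q.IsPath := by
    apply SimpleGraph.Walk.IsPath.mk'
    rw [hqs]
    have : (c :: l).Nodup ∧ a ∉ c :: l := ⟨hcl, hanotin⟩
    simp only [show c :: (l ++ [a]) = (c :: l) ++ [a] by simp, List.nodup_append]
    simp [hcl, hanotin]
    exact ⟨fun h => hanotin (by simp [h]), fun x hx h => hanotin (by simp [← h, hx])⟩
  have hedge : s(a, c) ∉ q.edges := by
    intro hmem
    rw [Sym2.eq_swap] at hmem
    have := walkOfChain_edge_end c l a _ hanotin hmem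
    have hgl : (c :: l).getLast (by simp) = l.getLast hl := List.getLast_cons hl
    rw [hgl] at this
    have : c ∈ l := this ▸ List.getLast_mem hl
    exact (List.nodup_cons.mp hcl).1 this
  refine ⟨a, SimpleGraph.Walk.cons hac q, ?_⟩
  rw [SimpleGraph.Walk.isHamiltonianCycle_iff_isCycle_and_support_count_tail_eq_one]
  constructor
  · exact (SimpleGraph.Walk.cons_isCycle_iff q hac).mpr ⟨hqpath, hedge⟩
  · intro v
    have : (SimpleGraph.Walk.cons hac q).support.tail = (c :: l) ++ [a] := by
      simp [hqs]
    rw [this, List.count_append]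
    by_cases hva : v = a
    · subst hva
      simp [List.count_eq_zero.mpr hanotin]
    · have hv : v ∈ c :: l := by
        have := hall v; simp only [List.mem_cons] at this
        rcases this with h | h | h
        · exact absurd h hva
        · simp [h]
        · simp [h]
      simp [List.count_eq_one_of_mem hcl hv, hva, List.count_cons, Ne.symm hva]


variable {V : Type*} [DecidableEq V] {G : SimpleGraph V}

lemma list_of_ham {a : V} (p : G.Walk a a) (hp : p.IsHamiltonianCycle) :
    ∃ l : List V, (a :: l).Nodup ∧ (∀ v, v ∈ a :: l) ∧ 3 ≤ (a :: l).length ∧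
      List.Chain' G.Adj (a :: (l ++ [a])) := by
  have hne : p.support.tail ≠ [] := by
    have := hp.isCycle.three_le_length
    cases p with
    | nil => simp at this
    | cons h q => simp
  have hnd : p.support.tail.Nodup := hp.isCycle.support_nodup
  have hdecomp : p.support.tail.dropLast ++ [a] = p.support.tail := by
    have hgl : p.support.tail.getLast hne = a := by
      rw [List.getLast_tail]
      exact p.getLast_support
    conv_rhs => rw [← List.dropLast_append_getLast hne, hgl]
  refine ⟨p.support.tail.dropLast, ?_, ?_, ?_, ?_⟩
  · rw [List.nodup_cons]
    rw [← hdecomp, List.nodup_append] at hnd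
    exact ⟨fun hmem => hnd.2.2 a hmem a (by simp) rfl, hnd.1⟩
  · intro v
    have hv : v ∈ p.support := hp.mem_support v
    rw [p.support_eq_cons, ← hdecomp] at hv
    simp only [List.mem_cons, List.mem_append, List.mem_singleton] at hv
    rcases hv with h | h | h
    · simp [h]
    · simp [h]
    · simp at h; simp [h]
  · have hlen : p.support.length = p.length + 1 := p.length_support
    have h3 : 3 ≤ p.length := hp.isCycle.three_le_length
    have h2 : p.support.tail.length + 1 = p.length + 1 := by
      rw [← hlen, p.support_eq_cons]; simp
    rw [← hdecomp] at h2
    simp at h2 ⊢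
    omega
  · have : a :: (p.support.tail.dropLast ++ [a]) = p.support := by
      rw [hdecomp, ← p.support_eq_cons]
    rw [this]
    exact p.isChain_adj_support

lemma cyc_rotate {α : Type*} {R : α → α → Prop} (x y : α) (ys : List α)
    (h : List.Chain' R (x :: (y :: ys ++ [x]))) :
    List.Chain' R (y :: ((ys ++ [x]) ++ [y])) := by
  have h1 : R x y := (List.isChain_cons_cons.mp h).1
  have h2 : List.Chain' R (y :: ys ++ [x]) := (List.isChain_cons_cons.mp h).2
  rw [show y :: ((ys ++ [x]) ++ [y]) = (y :: ys ++ [x]) ++ [y] by simp]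
  rw [List.Chain', List.isChain_append]
  refine ⟨h2, by simp, ?_⟩
  intro u hu v hv
  rw [show y :: ys ++ [x] = (y :: ys) ++ [x] by simp, List.getLast?_concat] at hu
  simp at hu hv
  rw [← hu, ← hv]
  exact h1

section Bip
variable {r : ℕ} {E : Fin r → Fin r → Prop}

lemma bip_adj_ll {i i' : Fin r} : ¬ (Bip r E).Adj (Sum.inl i) (Sum.inl i') := by
  simp [Bip]

lemma bip_adj_rr {j j' : Fin r} : ¬ (Bip r E).Adj (Sum.inr j) (Sum.inr j') := by
  simp [Bip]

lemma bip_adj_lr {i j : Fin r} : (Bip r E).Adj (Sum.inl i) (Sum.inr j) ↔ E i j := by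
  simp [Bip]

lemma bip_adj_rl {i j : Fin r} : (Bip r E).Adj (Sum.inr j) (Sum.inl i) ↔ E i j := by
  constructor
  · intro h; exact bip_adj_lr.mp h.symm
  · intro h; exact ((bip_adj_lr (E := E)).mpr h).symm

/-- `[m_i, n_j]` blocks -/
def pairF (p : Fin r × Fin r) : List (Fin r ⊕ Fin r) := [Sum.inl p.1, Sum.inr p.2]

lemma alt_decomp : ∀ (l : List (Fin r ⊕ Fin r)),
    List.Chain' (Bip r E).Adj l →
    (∀ h : l ≠ [], (l.getLast h).isRight) →
    (∀ h : l ≠ [], (l.head h).isLeft) →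
    ∃ L : List (Fin r × Fin r), l = L.flatMap pairF
  | [], _, _, _ => ⟨[], rfl⟩
  | [x], _, hlast, hhead => by
    have h1 := hlast (by simp)
    have h2 := hhead (by simp)
    simp at h1 h2
    cases x <;> simp_all
  | x :: y :: rest, hch, hlast, hhead => by
    obtain ⟨i, rfl⟩ : ∃ i, x = Sum.inl i := by
      have := hhead (by simp); cases x <;> simp_all
    obtain ⟨j, rfl⟩ : ∃ j, y = Sum.inr j := by
      have hadj : (Bip r E).Adj (Sum.inl i) y := (List.isChain_cons_cons.mp hch).1
      cases y with
      | inl i' => exact absurd hadj bip_adj_ll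
      | inr j => exact ⟨j, rfl⟩
    have hch' : List.Chain' (Bip r E).Adj rest :=
      ((List.isChain_cons_cons.mp hch).2).tail
    have hrec := alt_decomp rest hch' ?_ ?_
    · obtain ⟨L, hL⟩ := hrec
      exact ⟨(i, j) :: L, by simp [pairF, hL]⟩
    · intro h
      have := hlast (by simp)
      rwa [List.getLast_cons (by simp), List.getLast_cons h] at this
    · intro h
      obtain ⟨z, zs, rfl⟩ : ∃ z zs, rest = z :: zs := by
        cases rest with
        | nil => simp at h
        | cons z zs => exact ⟨_, _, rfl⟩
      have hadj : (Bip r E).Adj (Sum.inr j) z :=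
        (List.isChain_cons_cons.mp (List.isChain_cons_cons.mp hch).2).1
      cases z with
      | inl i' => simp
      | inr j' => exact absurd hadj bip_adj_rr
  termination_by l => l.length
end Bip

section Bip2
variable {r : ℕ} {E : Fin r → Fin r → Prop}

lemma mem_flat_inl {L : List (Fin r × Fin r)} {x : Fin r} :
    Sum.inl x ∈ L.flatMap (pairF (r := r)) ↔ x ∈ L.map Prod.fst := by
  simp [List.mem_flatMap, pairF, List.mem_map]

lemma mem_flat_inr {L : List (Fin r × Fin r)} {x : Fin r} :
    Sum.inr x ∈ L.flatMap (pairF (r := r)) ↔ x ∈ L.map Prod.snd := by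
  simp [List.mem_flatMap, pairF, List.mem_map]

lemma nodup_fst_snd {L : List (Fin r × Fin r)} (h : (L.flatMap (pairF (r := r))).Nodup) :
    (L.map Prod.fst).Nodup ∧ (L.map Prod.snd).Nodup := by
  induction L with
  | nil => simp
  | cons p L ih =>
    rw [List.flatMap_cons] at h
    simp only [pairF] at h
    rw [show ([Sum.inl p.1, Sum.inr p.2] : List (Fin r ⊕ Fin r)) ++ L.flatMap pairF
      = Sum.inl p.1 :: Sum.inr p.2 :: L.flatMap pairF by simp] at h
    rw [List.nodup_cons, List.nodup_cons] at h
    obtain ⟨h1, h2, h3⟩ := h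
    obtain ⟨ih1, ih2⟩ := ih h3
    constructor
    · simp only [List.map_cons, List.nodup_cons]
      refine ⟨fun hmem => ?_, ih1⟩
      exact h1 (List.mem_cons_of_mem _ (mem_flat_inl.mpr hmem))
    · simp only [List.map_cons, List.nodup_cons]
      refine ⟨fun hmem => ?_, ih2⟩
      exact h2 (mem_flat_inr.mpr hmem)

lemma L_facts : ∀ (L : List (Fin r × Fin r)) (i0 : Fin r),
    List.Chain' (Bip r E).Adj ((L.flatMap pairF) ++ [Sum.inl i0]) →
    (∀ p ∈ L, E p.1 p.2) ∧ List.Chain' (fun p q => E q.1 p.2) L ∧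
      (∀ h : L ≠ [], E i0 (L.getLast h).2) := by
  intro L
  induction L with
  | nil => simp [List.Chain']
  | cons p L ih =>
    intro i0 hch
    rw [List.flatMap_cons] at hch
    simp only [pairF] at hch
    rw [show ([Sum.inl p.1, Sum.inr p.2] : List (Fin r ⊕ Fin r)) ++ L.flatMap pairF ++ [Sum.inl i0]
      = Sum.inl p.1 :: Sum.inr p.2 :: (L.flatMap pairF ++ [Sum.inl i0]) by simp] at hch
    have hpair : E p.1 p.2 := bip_adj_lr.mp (List.isChain_cons_cons.mp hch).1
    have hch2 : List.Chain' (Bip r E).Adj (Sum.inr p.2 :: (L.flatMap pairF ++ [Sum.inl i0])) :=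
      (List.isChain_cons_cons.mp hch).2
    have hrest : List.Chain' (Bip r E).Adj (L.flatMap pairF ++ [Sum.inl i0]) := hch2.tail
    obtain ⟨ih1, ih2, ih3⟩ := ih i0 hrest
    refine ⟨?_, ?_, ?_⟩
    · intro q hq
      rcases List.mem_cons.mp hq with rfl | hq'
      · exact hpair
      · exact ih1 q hq'
    · cases L with
      | nil => simp [List.Chain']
      | cons q L' =>
        rw [List.Chain', List.isChain_cons_cons]
        refine ⟨?_, ih2⟩
        have : (Bip r E).Adj (Sum.inr p.2) (Sum.inl q.1) := by
          rw [List.flatMap_cons] at hch2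
          simp only [pairF] at hch2
          rw [show ([Sum.inl q.1, Sum.inr q.2] : List (Fin r ⊕ Fin r)) ++ L'.flatMap pairF
              ++ [Sum.inl i0] = Sum.inl q.1 :: (Sum.inr q.2 :: (L'.flatMap pairF ++ [Sum.inl i0]))
              by simp] at hch2
          exact (List.isChain_cons_cons.mp hch2).1
        exact bip_adj_rl.mp this
    · intro h
      cases L with
      | nil =>
        simp only [List.getLast_singleton]
        have : (Bip r E).Adj (Sum.inr p.2) (Sum.inl i0) := by
          simp only [List.flatMap_nil, List.nil_append] at hch2
          exact (List.isChain_cons_cons.mp hch2).1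
        exact bip_adj_rl.mp this
      | cons q L' =>
        rw [List.getLast_cons (by simp)]
        exact ih3 (by simp)
end Bip2

section Gside
attribute [local instance] Classical.propDecidable
variable {r : ℕ} {E : Fin r → Fin r → Prop}

lemma inK_Xv {s i : Fin r} : inK s (Xv i : Vtx r E) ↔ i = s := Iff.rfl
lemma inK_Av {s i j : Fin r} {h : E i j} : inK s (Av i j h : Vtx r E) ↔ i ≤ s := Iff.rfl
lemma inK'_Yv {j' j : Fin r} : inK' j' (Yv j : Vtx r E) ↔ j = j' := Iff.rfl
lemma inK'_Av {j' i j : Fin r} {h : E i j} : inK' j' (Av i j h : Vtx r E) ↔ j = j' := Iff.rfl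
lemma inK''_Zv {j' j : Fin r} {h3} : inK'' j' (Zv j h3 : Vtx r E) ↔ j = j' := Iff.rfl
lemma inK''_Av {j' i j : Fin r} {h : E i j} : inK'' j' (Av i j h : Vtx r E) ↔ j = j' := Iff.rfl

lemma gr_adj_K {u v : Vtx r E} (s : Fin r) (hu : inK s u) (hv : inK s v) (hne : u ≠ v) :
    (Gr r E).Adj u v := by
  rw [Gr, SimpleGraph.fromRel_adj]
  exact ⟨hne, Or.inl (Or.inl ⟨s, hu, hv⟩)⟩

lemma gr_adj_K' {u v : Vtx r E} (j : Fin r) (hu : inK' j u) (hv : inK' j v) (hne : u ≠ v) :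
    (Gr r E).Adj u v := by
  rw [Gr, SimpleGraph.fromRel_adj]
  exact ⟨hne, Or.inl (Or.inr (Or.inl ⟨j, hu, hv⟩))⟩

lemma gr_adj_K'' {u v : Vtx r E} (j : Fin r) (h3 : {i : Fin r | E i j}.ncard = 3)
    (hu : inK'' j u) (hv : inK'' j v) (hne : u ≠ v) : (Gr r E).Adj u v := by
  rw [Gr, SimpleGraph.fromRel_adj]
  exact ⟨hne, Or.inl (Or.inr (Or.inr ⟨j, h3, hu, hv⟩))⟩

lemma vtx_eq_iff {x y} {hx hy} : (⟨x, hx⟩ : Vtx r E) = ⟨y, hy⟩ ↔ x = y := Subtype.ext_iff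

lemma adj_XA {i j : Fin r} (h : E i j) : (Gr r E).Adj (Xv i) (Av i j h) :=
  gr_adj_K i (inK_Xv.mpr rfl) (inK_Av.mpr le_rfl) (by intro hh; exact absurd (vtx_eq_iff.mp hh) (by simp))

lemma adj_AX {k j : Fin r} (h : E k j) : (Gr r E).Adj (Av k j h) (Xv k) :=
  gr_adj_K k (inK_Av.mpr le_rfl) (inK_Xv.mpr rfl) (by intro hh; exact absurd (vtx_eq_iff.mp hh) (by simp))

lemma adj_AY {i j : Fin r} (h : E i j) : (Gr r E).Adj (Av i j h) (Yv j) :=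
  gr_adj_K' j (inK'_Av.mpr rfl) (inK'_Yv.mpr rfl) (by intro hh; exact absurd (vtx_eq_iff.mp hh) (by simp))

lemma adj_YA {i j : Fin r} (h : E i j) : (Gr r E).Adj (Yv j) (Av i j h) :=
  gr_adj_K' j (inK'_Yv.mpr rfl) (inK'_Av.mpr rfl) (by intro hh; exact absurd (vtx_eq_iff.mp hh) (by simp))

lemma adj_AZ {i j : Fin r} (h : E i j) (h3 : {i : Fin r | E i j}.ncard = 3) :
    (Gr r E).Adj (Av i j h) (Zv j h3) :=
  gr_adj_K'' j h3 (inK''_Av.mpr rfl) (inK''_Zv.mpr rfl) (by intro hh; exact absurd (vtx_eq_iff.mp hh) (by simp))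

lemma adj_ZA {i j : Fin r} (h : E i j) (h3 : {i : Fin r | E i j}.ncard = 3) :
    (Gr r E).Adj (Zv j h3) (Av i j h) :=
  gr_adj_K'' j h3 (inK''_Zv.mpr rfl) (inK''_Av.mpr rfl) (by intro hh; exact absurd (vtx_eq_iff.mp hh) (by simp))


noncomputable def Av' (E : Fin r → Fin r → Prop) (i j : Fin r) : Vtx r E :=
  if h : E i j then Av i j h else Xv i

noncomputable def Zv' (E : Fin r → Fin r → Prop) (j : Fin r) : Vtx r E :=
  if h : {i : Fin r | E i j}.ncard = 3 then Zv j h else Yv j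

noncomputable def thrd (E : Fin r → Fin r → Prop) (j i k : Fin r) : Fin r :=
  if h : ({x : Fin r | E x j} \ {i, k}).Nonempty then h.choose else i

lemma thrd_spec {i j k : Fin r} (h3 : {x : Fin r | E x j}.ncard = 3) (hi : E i j)
    (hk : E k j) (hik : i ≠ k) :
    E (thrd E j i k) j ∧ thrd E j i k ≠ i ∧ thrd E j i k ≠ k := by
  have hsub : ({i, k} : Set (Fin r)) ⊆ {x | E x j} := by
    intro x hx
    rcases hx with rfl | hx
    · exact hi
    · rw [Set.mem_singleton_iff] at hx; subst hx; exact hk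
  have hcard : ({x : Fin r | E x j} \ {i, k}).ncard = 1 := by
    rw [Set.ncard_diff hsub (Set.toFinite _), h3, Set.ncard_pair hik]
  have hne : ({x : Fin r | E x j} \ {i, k}).Nonempty :=
    (Set.ncard_pos (Set.toFinite _)).mp (by omega)
  rw [thrd, dif_pos hne]
  have hspec := hne.choose_spec
  obtain ⟨h1, h2⟩ := hspec
  simp only [Set.mem_insert_iff, Set.mem_singleton_iff, not_or] at h2
  exact ⟨h1, h2.1, h2.2⟩

lemma deg3_eq {i j k : Fin r} (h3 : {x : Fin r | E x j}.ncard = 3) (hi : E i j)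
    (hk : E k j) (hik : i ≠ k) :
    {x : Fin r | E x j} = {i, thrd E j i k, k} := by
  obtain ⟨ht, hti, htk⟩ := thrd_spec h3 hi hk hik
  refine (Set.eq_of_subset_of_ncard_le ?_ ?_ (Set.toFinite _)).symm
  · intro x hx
    rcases hx with rfl | rfl | hx
    · exact hi
    · exact ht
    · rw [Set.mem_singleton_iff] at hx; subst hx; exact hk
  · rw [h3]
    rw [Set.ncard_insert_of_notMem (by simp [hik, Ne.symm hti]) (Set.toFinite _),
      Set.ncard_pair htk]

lemma deg2_eq {i j k : Fin r} (h2 : {x : Fin r | E x j}.ncard = 2) (hi : E i j)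
    (hk : E k j) (hik : i ≠ k) :
    {x : Fin r | E x j} = {i, k} := by
  refine (Set.eq_of_subset_of_ncard_le ?_ ?_ (Set.toFinite _)).symm
  · intro x hx
    rcases hx with rfl | hx
    · exact hi
    · rw [Set.mem_singleton_iff] at hx; subst hx; exact hk
  · rw [h2, Set.ncard_pair hik]

noncomputable def blockF (E : Fin r → Fin r → Prop) (t : Fin r × Fin r × Fin r) :
    List (Vtx r E) :=
  if {x : Fin r | E x t.2.1}.ncard = 3 then
    [Xv t.1, Av' E t.1 t.2.1, Yv t.2.1, Av' E (thrd E t.2.1 t.1 t.2.2) t.2.1,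
      Zv' E t.2.1, Av' E t.2.2 t.2.1]
  else [Xv t.1, Av' E t.1 t.2.1, Yv t.2.1, Av' E t.2.2 t.2.1]

lemma blockF_eq3 {i j k : Fin r} (h3 : {x : Fin r | E x j}.ncard = 3) (hi : E i j)
    (hk : E k j) (hik : i ≠ k) :
    blockF E (i, j, k) = [Xv i, Av i j hi, Yv j,
      Av (thrd E j i k) j (thrd_spec h3 hi hk hik).1, Zv j h3, Av k j hk] := by
  obtain ⟨ht, _, _⟩ := thrd_spec h3 hi hk hik
  simp only [blockF, if_pos h3, Av', Zv', dif_pos hi, dif_pos hk, dif_pos ht, dif_pos h3]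

lemma blockF_eq2 {i j k : Fin r} (h2 : {x : Fin r | E x j}.ncard = 2) (hi : E i j)
    (hk : E k j) :
    blockF E (i, j, k) = [Xv i, Av i j hi, Yv j, Av k j hk] := by
  have hn3 : ¬ {x : Fin r | E x j}.ncard = 3 := by omega
  simp only [blockF, if_neg hn3, Av', dif_pos hi, dif_pos hk]

lemma blockF_head_mem (t : Fin r × Fin r × Fin r) : Xv t.1 ∈ blockF E t := by
  unfold blockF; split <;> simp

lemma blockF_head' (t : Fin r × Fin r × Fin r) :
    ∃ bl, blockF E t = Xv t.1 :: bl := by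
  unfold blockF; split
  · exact ⟨_, rfl⟩
  · exact ⟨_, rfl⟩


def cyc3 (i0 : Fin r) : List (Fin r × Fin r) → List (Fin r × Fin r × Fin r)
  | [] => []
  | [p] => [(p.1, p.2, i0)]
  | p :: q :: L => (p.1, p.2, q.1) :: cyc3 i0 (q :: L)

lemma cyc3_map_fst (i0 : Fin r) (L : List (Fin r × Fin r)) :
    (cyc3 i0 L).map (fun t => t.1) = L.map Prod.fst := by
  induction L with
  | nil => rfl
  | cons p L ih =>
    cases L with
    | nil => rfl
    | cons q L' => simp only [cyc3, List.map_cons] at ih ⊢; rw [ih]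

lemma cyc3_map_snd (i0 : Fin r) (L : List (Fin r × Fin r)) :
    (cyc3 i0 L).map (fun t => t.2.1) = L.map Prod.snd := by
  induction L with
  | nil => rfl
  | cons p L ih =>
    cases L with
    | nil => rfl
    | cons q L' => simp only [cyc3, List.map_cons] at ih ⊢; rw [ih]

lemma cyc3_cons (i0 : Fin r) (q : Fin r × Fin r) (L' : List (Fin r × Fin r)) :
    ∃ rest, cyc3 i0 (q :: L') = (q.1, q.2, (match L' with | [] => i0 | q' :: _ => q'.1)) :: rest := by
  cases L' with
  | nil => exact ⟨_, rfl⟩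
  | cons q' L'' => exact ⟨_, rfl⟩

lemma cyc3_mem (i0 : Fin r) : ∀ (L : List (Fin r × Fin r)),
    (∀ p ∈ L, E p.1 p.2) → List.Chain' (fun p q => E q.1 p.2) L →
    (∀ h : L ≠ [], E i0 (L.getLast h).2) →
    List.Chain' (fun (p q : Fin r × Fin r) => p.1 ≠ q.1) L →
    (∀ h : L ≠ [], (L.getLast h).1 ≠ i0) →
    ∀ t ∈ cyc3 i0 L, E t.1 t.2.1 ∧ E t.2.2 t.2.1 ∧ t.1 ≠ t.2.2 := by
  intro L
  induction L with
  | nil => intro _ _ _ _ _ t ht; simp [cyc3] at ht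
  | cons p L ih =>
    intro hmem hch hlast hne hlastne t ht
    cases L with
    | nil =>
      simp only [cyc3, List.mem_singleton] at ht
      subst ht
      exact ⟨hmem p (by simp), hlast (by simp), hlastne (by simp)⟩
    | cons q L' =>
      simp only [cyc3, List.mem_cons] at ht
      rcases ht with rfl | ht
      · exact ⟨hmem p (by simp), (List.isChain_cons_cons.mp hch).1,
          (List.isChain_cons_cons.mp hne).1⟩
      · refine ih ?_ (List.isChain_cons_cons.mp hch).2 ?_ (List.isChain_cons_cons.mp hne).2 ?_ t ht
        · intro p' hp'; exact hmem p' (List.mem_cons_of_mem _ hp')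
        · intro h
          have := hlast (by simp)
          rwa [List.getLast_cons h] at this
        · intro h
          have := hlastne (by simp)
          rwa [List.getLast_cons h] at this

def jtag : Vtx r E → Option (Fin r) := fun v => match v.val with
  | Sum.inl _ => none
  | Sum.inr (Sum.inl j) => some j
  | Sum.inr (Sum.inr (Sum.inl j)) => some j
  | Sum.inr (Sum.inr (Sum.inr (_, j))) => some j

lemma jtag_Xv (i : Fin r) : jtag (Xv i : Vtx r E) = none := rfl
lemma jtag_Yv (j : Fin r) : jtag (Yv j : Vtx r E) = some j := rfl
lemma jtag_Zv (j : Fin r) (h3) : jtag (Zv j h3 : Vtx r E) = some j := rfl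
lemma jtag_Av (i j : Fin r) (h) : jtag (Av i j h : Vtx r E) = some j := rfl

lemma blockF_mem_tag {i j k : Fin r} (hi : E i j) (hk : E k j) (hik : i ≠ k)
    (v : Vtx r E) (hv : v ∈ blockF E (i, j, k)) : v = Xv i ∨ jtag v = some j := by
  rcases eq_or_ne ({x : Fin r | E x j}.ncard) 3 with h3 | h3
  · rw [blockF_eq3 h3 hi hk hik] at hv
    simp only [List.mem_cons, List.not_mem_nil, or_false] at hv
    rcases hv with rfl | rfl | rfl | rfl | rfl | rfl
    · exact Or.inl rfl
    · exact Or.inr (jtag_Av _ _ _)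
    · exact Or.inr (jtag_Yv _)
    · exact Or.inr (jtag_Av _ _ _)
    · exact Or.inr (jtag_Zv _ _)
    · exact Or.inr (jtag_Av _ _ _)
  · unfold blockF at hv
    rw [if_neg h3] at hv
    simp only [Av', dif_pos hi, dif_pos hk, List.mem_cons, List.not_mem_nil, or_false] at hv
    rcases hv with rfl | rfl | rfl | rfl
    · exact Or.inl rfl
    · exact Or.inr (jtag_Av _ _ _)
    · exact Or.inr (jtag_Yv _)
    · exact Or.inr (jtag_Av _ _ _)


lemma blockF_nodup {i j k : Fin r} (hi : E i j) (hk : E k j) (hik : i ≠ k) :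
    (blockF E (i, j, k)).Nodup := by
  have key : ∀ l : List (Vtx r E), (l.map (fun v : Vtx r E => v.val)).Nodup → l.Nodup :=
    fun l h => h.of_map _
  rcases eq_or_ne ({x : Fin r | E x j}.ncard) 3 with h3 | h3
  · obtain ⟨hth, hthi, hthk⟩ := thrd_spec h3 hi hk hik
    rw [blockF_eq3 h3 hi hk hik]
    apply key
    simp only [List.map_cons, List.map_nil]
    simp [Xv, Av, Yv, Zv, hik, hthi, hthk, hthi.symm, hthk.symm, Ne.symm hik, hthi.symm.symm]
  · rcases eq_or_ne ({x : Fin r | E x j}.ncard) 2 with h2 | h2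
    · rw [blockF_eq2 h2 hi hk]
      apply key
      simp only [List.map_cons, List.map_nil]
      simp [Xv, Av, Yv, hik]
    · unfold blockF
      rw [if_neg h3]
      apply key
      simp only [Av', dif_pos hi, dif_pos hk, List.map_cons, List.map_nil]
      simp [Xv, Av, Av', Yv, dif_pos hi, dif_pos hk, hik]

lemma blockF_chain {i j k : Fin r} (hi : E i j) (hk : E k j) (hik : i ≠ k) :
    List.Chain' (Gr r E).Adj (blockF E (i, j, k) ++ [Xv k]) := by
  rcases eq_or_ne ({x : Fin r | E x j}.ncard) 3 with h3 | h3
  · obtain ⟨hth, hthi, hthk⟩ := thrd_spec h3 hi hk hik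
    rw [blockF_eq3 h3 hi hk hik]
    simp only [List.cons_append, List.nil_append, List.Chain', List.isChain_cons_cons, List.isChain_singleton,
      and_true]
    exact ⟨adj_XA hi, adj_AY hi, adj_YA hth, adj_AZ hth h3, adj_ZA hk h3, adj_AX hk⟩
  · unfold blockF
    rw [if_neg h3]
    simp only [Av', dif_pos hi, dif_pos hk, List.cons_append, List.nil_append,
      List.Chain', List.isChain_cons_cons, List.isChain_singleton, and_true]
    exact ⟨adj_XA hi, adj_AY hi, adj_YA hk, adj_AX hk⟩

lemma blockF_len (t : Fin r × Fin r × Fin r) : 4 ≤ (blockF E t).length := by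
  unfold blockF; split <;> simp

lemma blockF_cover_Y {i j k : Fin r} : (Yv j : Vtx r E) ∈ blockF E (i, j, k) := by
  unfold blockF; split <;> simp

lemma blockF_cover_Z {i j k : Fin r} (h3 : {x : Fin r | E x j}.ncard = 3) :
    (Zv j h3 : Vtx r E) ∈ blockF E (i, j, k) := by
  unfold blockF
  rw [if_pos h3]
  simp [Zv', dif_pos h3]

lemma blockF_cover_A {i j k : Fin r} (hi : E i j) (hk : E k j) (hik : i ≠ k)
    (hdegj : {x : Fin r | E x j}.ncard = 2 ∨ {x : Fin r | E x j}.ncard = 3)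
    (i' : Fin r) (hi' : E i' j) : (Av i' j hi' : Vtx r E) ∈ blockF E (i, j, k) := by
  rcases hdegj with h2 | h3
  · have hset := deg2_eq h2 hi hk hik
    have : i' ∈ ({i, k} : Set (Fin r)) := hset ▸ hi'
    rw [blockF_eq2 h2 hi hk]
    rcases this with rfl | hthis
    · have : (Av i' j hi' : Vtx r E) = Av i' j hi := Subtype.ext rfl
      rw [this]; simp
    · rw [Set.mem_singleton_iff] at hthis; subst hthis
      have : (Av i' j hi' : Vtx r E) = Av i' j hk := Subtype.ext rfl
      rw [this]; simp
  · have hset := deg3_eq h3 hi hk hik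
    have hmem : i' ∈ ({i, thrd E j i k, k} : Set (Fin r)) := hset ▸ hi'
    obtain ⟨hth, _, _⟩ := thrd_spec h3 hi hk hik
    rw [blockF_eq3 h3 hi hk hik]
    rcases hmem with rfl | hm | hm
    · have : (Av i' j hi' : Vtx r E) = Av i' j hi := Subtype.ext rfl
      rw [this]; simp
    · subst hm
      have h' : (Av (thrd E j i k) j hi' : Vtx r E)
          = Av (thrd E j i k) j (thrd_spec h3 hi hk hik).1 := Subtype.ext rfl
      rw [h']; simp
    · rw [Set.mem_singleton_iff] at hm; subst hm
      have : (Av i' j hi' : Vtx r E) = Av i' j hk := Subtype.ext rfl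
      rw [this]; simp


lemma chain'_glue {α : Type*} {R : α → α → Prop} {l1 l2 : List α} {x : α}
    (h2ne : l2.head? = some x) (h1 : List.Chain' R (l1 ++ [x]))
    (h2 : List.Chain' R l2) : List.Chain' R (l1 ++ l2) := by
  rw [List.Chain', List.isChain_append] at h1 ⊢
  refine ⟨h1.1, h2, ?_⟩
  intro u hu v hv
  rw [h2ne, Option.mem_some_iff] at hv
  subst hv
  exact h1.2.2 u hu x (by simp)

lemma chain_blocks (i0 : Fin r) : ∀ L : List (Fin r × Fin r),
    (∀ t ∈ cyc3 i0 L, E t.1 t.2.1 ∧ E t.2.2 t.2.1 ∧ t.1 ≠ t.2.2) →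
    List.Chain' (Gr r E).Adj (((cyc3 i0 L).flatMap (blockF E)) ++ [Xv i0]) := by
  intro L
  induction L with
  | nil => intro _; simp [cyc3, List.Chain']
  | cons p L ih =>
    intro hfacts
    cases L with
    | nil =>
      simp only [cyc3, List.flatMap_cons, List.flatMap_nil, List.append_nil]
      obtain ⟨h1, h2, h3⟩ := hfacts (p.1, p.2, i0) (by simp [cyc3])
      exact blockF_chain h1 h2 h3
    | cons q L' =>
      have hexp : cyc3 i0 (p :: q :: L') = (p.1, p.2, q.1) :: cyc3 i0 (q :: L') := rfl
      rw [hexp, List.flatMap_cons, List.append_assoc]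
      obtain ⟨h1, h2, h3⟩ := hfacts (p.1, p.2, q.1) (by rw [hexp]; simp)
      have hrest := ih (fun t ht => hfacts t (by rw [hexp]; exact List.mem_cons_of_mem _ ht))
      refine chain'_glue ?_ (blockF_chain h1 h2 h3) hrest
      cases L' with
      | nil =>
        show ((cyc3 i0 [q]).flatMap (blockF E) ++ [Xv i0]).head? = some (Xv q.1)
        have hq : cyc3 i0 [q] = [(q.1, q.2, i0)] := rfl
        rw [hq, List.flatMap_cons]
        obtain ⟨bl, hbl⟩ := blockF_head' (E := E) (q.1, q.2, i0)
        rw [hbl]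
        simp
      | cons q' L'' =>
        show ((cyc3 i0 (q :: q' :: L'')).flatMap (blockF E) ++ [Xv i0]).head?
          = some (Xv q.1)
        have hq : cyc3 i0 (q :: q' :: L'') = (q.1, q.2, q'.1) :: cyc3 i0 (q' :: L'') := rfl
        rw [hq, List.flatMap_cons]
        obtain ⟨bl, hbl⟩ := blockF_head' (E := E) (q.1, q.2, q'.1)
        rw [hbl]
        simp

lemma glist_nodup (i0 : Fin r) (L : List (Fin r × Fin r))
    (hfacts : ∀ t ∈ cyc3 i0 L, E t.1 t.2.1 ∧ E t.2.2 t.2.1 ∧ t.1 ≠ t.2.2)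
    (hfst : (L.map Prod.fst).Nodup) (hsnd : (L.map Prod.snd).Nodup) :
    ((cyc3 i0 L).flatMap (blockF E)).Nodup := by
  rw [List.nodup_flatMap]
  constructor
  · intro t ht
    obtain ⟨h1, h2, h3⟩ := hfacts t ht
    have : t = (t.1, t.2.1, t.2.2) := rfl
    rw [this]
    exact blockF_nodup h1 h2 h3
  · have hp1 : (cyc3 i0 L).Pairwise (fun t t' => t.1 ≠ t'.1) := by
      have h := hfst
      rw [← cyc3_map_fst i0 L] at h
      exact List.pairwise_map.mp h
    have hp2 : (cyc3 i0 L).Pairwise (fun t t' => t.2.1 ≠ t'.2.1) := by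
      have h := hsnd
      rw [← cyc3_map_snd i0 L] at h
      exact List.pairwise_map.mp h
    have hp := hp1.and hp2
    refine hp.imp_of_mem ?_
    intro t t' ht ht' hne
    obtain ⟨h1, h2, h3⟩ := hfacts t ht
    obtain ⟨h1', h2', h3'⟩ := hfacts t' ht'
    intro v hv hv'
    have htag : v = Xv t.1 ∨ jtag v = some t.2.1 := by
      have : t = (t.1, t.2.1, t.2.2) := rfl
      exact blockF_mem_tag h1 h2 h3 v (by rwa [← this])
    have htag' : v = Xv t'.1 ∨ jtag v = some t'.2.1 := by
      have : t' = (t'.1, t'.2.1, t'.2.2) := rfl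
      exact blockF_mem_tag h1' h2' h3' v (by rwa [← this])
    rcases htag with rfl | htg
    · rcases htag' with heq | htg'
      · exact hne.1 (Sum.inl.inj (vtx_eq_iff.mp heq))
      · rw [jtag_Xv] at htg'; simp at htg'
    · rcases htag' with rfl | htg'
      · rw [jtag_Xv] at htg; simp at htg
      · rw [htg] at htg'
        exact hne.2 (Option.some_injective _ htg')

lemma glist_cover (i0 : Fin r) (L : List (Fin r × Fin r))
    (hfacts : ∀ t ∈ cyc3 i0 L, E t.1 t.2.1 ∧ E t.2.2 t.2.1 ∧ t.1 ≠ t.2.2)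
    (hdeg : ∀ j : Fin r, {i : Fin r | E i j}.ncard = 2 ∨ {i : Fin r | E i j}.ncard = 3)
    (hfstall : ∀ i : Fin r, i ∈ L.map Prod.fst) (hsndall : ∀ j : Fin r, j ∈ L.map Prod.snd) :
    ∀ v : Vtx r E, v ∈ (cyc3 i0 L).flatMap (blockF E) := by
  intro v
  rw [List.mem_flatMap]
  obtain ⟨x, hx⟩ := v
  rcases x with i | j | j | ⟨i, j⟩
  · have : i ∈ (cyc3 i0 L).map (fun t => t.1) := by
      rw [cyc3_map_fst]; exact hfstall i
    obtain ⟨t, ht, rfl⟩ := List.mem_map.mp this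
    refine ⟨t, ht, ?_⟩
    have hX : (⟨Sum.inl t.1, hx⟩ : Vtx r E) = Xv t.1 := Subtype.ext rfl
    rw [hX]
    exact blockF_head_mem t
  · have : j ∈ (cyc3 i0 L).map (fun t => t.2.1) := by
      rw [cyc3_map_snd]; exact hsndall j
    obtain ⟨t, ht, rfl⟩ := List.mem_map.mp this
    refine ⟨t, ht, ?_⟩
    have hY : (⟨Sum.inr (Sum.inl t.2.1), hx⟩ : Vtx r E) = Yv t.2.1 := Subtype.ext rfl
    rw [hY]
    have : t = (t.1, t.2.1, t.2.2) := rfl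
    rw [this]
    exact blockF_cover_Y
  · have : j ∈ (cyc3 i0 L).map (fun t => t.2.1) := by
      rw [cyc3_map_snd]; exact hsndall j
    obtain ⟨t, ht, rfl⟩ := List.mem_map.mp this
    refine ⟨t, ht, ?_⟩
    have hZ : (⟨Sum.inr (Sum.inr (Sum.inl t.2.1)), hx⟩ : Vtx r E) = Zv t.2.1 hx :=
      Subtype.ext rfl
    rw [hZ]
    exact blockF_cover_Z (i := t.1) (k := t.2.2) hx
  · have : j ∈ (cyc3 i0 L).map (fun t => t.2.1) := by
      rw [cyc3_map_snd]; exact hsndall j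
    obtain ⟨t, ht, rfl⟩ := List.mem_map.mp this
    refine ⟨t, ht, ?_⟩
    have hA : (⟨Sum.inr (Sum.inr (Sum.inr (i, t.2.1))), hx⟩ : Vtx r E) = Av i t.2.1 hx :=
      Subtype.ext rfl
    rw [hA]
    obtain ⟨h1, h2, h3⟩ := hfacts t ht
    exact blockF_cover_A h1 h2 h3 (hdeg t.2.1) i hx

end Gside

/-- If the bipartite graph `B` has a Hamiltonian cycle, then the graph `G`
constructed from `B` by the reduction has a Hamiltonian cycle. -/
theorem stmt_10 (r : ℕ) (hr : 2 ≤ r) (E : Fin r → Fin r → Prop)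
    (hdeg : ∀ j : Fin r, {i : Fin r | E i j}.ncard = 2 ∨ {i : Fin r | E i j}.ncard = 3)
    (hB : ∃ (a : Fin r ⊕ Fin r) (p : (Bip r E).Walk a a), p.IsHamiltonianCycle) :
    ∃ (b : Vtx r E) (q : (Gr r E).Walk b b), q.IsHamiltonianCycle := by
  classical
  obtain ⟨a, p, hp⟩ := hB
  obtain ⟨l, hnd, hall, hlen, hch⟩ := list_of_ham p hp
  obtain ⟨i₀, l2, hnd2, hall2, hch2⟩ :
      ∃ (i₀ : Fin r) (l2 : List (Fin r ⊕ Fin r)),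
        (Sum.inl i₀ :: l2).Nodup ∧ (∀ v, v ∈ Sum.inl i₀ :: l2) ∧
        List.Chain' (Bip r E).Adj (Sum.inl i₀ :: (l2 ++ [Sum.inl i₀])) := by
    cases a with
    | inl i₀ => exact ⟨i₀, l, hnd, hall, hch⟩
    | inr j₀ =>
      obtain ⟨y, ys, rfl⟩ : ∃ y ys, l = y :: ys := by
        cases l with
        | nil => simp at hlen
        | cons y ys => exact ⟨_, _, rfl⟩
      obtain ⟨i₀, rfl⟩ : ∃ i₀, y = Sum.inl i₀ := by
        have hadj : (Bip r E).Adj (Sum.inr j₀) y := (List.isChain_cons_cons.mp hch).1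
        cases y with
        | inl i => exact ⟨i, rfl⟩
        | inr => exact absurd hadj bip_adj_rr
      refine ⟨i₀, ys ++ [Sum.inr j₀], ?_, ?_, ?_⟩
      · have hperm : (Sum.inr j₀ :: Sum.inl i₀ :: ys).Perm
            (Sum.inl i₀ :: (ys ++ [Sum.inr j₀])) := by
          refine (List.Perm.swap _ _ _).trans ?_
          exact List.Perm.cons _ (List.perm_append_singleton _ _).symm
        exact hperm.nodup hnd
      · intro v
        have := hall v
        simp only [List.mem_cons, List.mem_append, List.mem_singleton] at this ⊢
        tauto
      · exact cyc_rotate (Sum.inr j₀) (Sum.inl i₀) ys hch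
  have hcard : 2 * r ≤ (Sum.inl i₀ :: l2).length := by
    have huniv : (Sum.inl i₀ :: l2).toFinset = (Finset.univ : Finset (Fin r ⊕ Fin r)) :=
      Finset.eq_univ_iff_forall.mpr (fun v => List.mem_toFinset.mpr (hall2 v))
    have h1 : (Finset.univ : Finset (Fin r ⊕ Fin r)).card = 2 * r := by
      simp [Fintype.card_sum]
      omega
    have h2 := (Sum.inl i₀ :: l2).toFinset_card_le
    rw [huniv, h1] at h2
    exact h2
  have hshape : Sum.inl i₀ :: (l2 ++ [Sum.inl i₀]) = (Sum.inl i₀ :: l2) ++ [Sum.inl i₀] := by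
    simp
  have hchainfull : List.Chain' (Bip r E).Adj ((Sum.inl i₀ :: l2) ++ [Sum.inl i₀]) := by
    rw [← hshape]; exact hch2
  have hchain_only : List.Chain' (Bip r E).Adj (Sum.inl i₀ :: l2) :=
    (List.isChain_append.mp hchainfull).1
  have hlastadj : (Bip r E).Adj ((Sum.inl i₀ :: l2).getLast (by simp)) (Sum.inl i₀) := by
    have := (List.isChain_append.mp hchainfull).2.2
    exact this _ (by rw [List.getLast?_eq_getLast (by simp)]; simp) _ (by simp)
  have hgetLast_right : ∀ h : (Sum.inl i₀ :: l2) ≠ [],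
      ((Sum.inl i₀ :: l2).getLast h).isRight := by
    intro h
    rcases hgl : (Sum.inl i₀ :: l2).getLast h with i | j
    · rw [hgl] at hlastadj
      exact absurd hlastadj bip_adj_ll
    · simp
  obtain ⟨L, hL⟩ := alt_decomp (Sum.inl i₀ :: l2) hchain_only hgetLast_right
    (fun h => by simp)
  obtain ⟨p1, L', rfl⟩ : ∃ p1 L', L = p1 :: L' := by
    cases L with
    | nil => simp at hL
    | cons p1 L' => exact ⟨_, _, rfl⟩
  have hp1 : p1.1 = i₀ := by
    rw [List.flatMap_cons] at hL
    simp only [pairF, List.cons_append] at hL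
    exact (Sum.inl.inj (List.head_eq_of_cons_eq hL)).symm
  have hchfull : List.Chain' (Bip r E).Adj (((p1 :: L').flatMap pairF) ++ [Sum.inl i₀]) := by
    rw [← hL]; exact hchainfull
  obtain ⟨HmemL, HchL, HlastL⟩ := L_facts (p1 :: L') i₀ hchfull
  obtain ⟨hfstnd, hsndnd⟩ := nodup_fst_snd (by rw [← hL]; exact hnd2)
  have hfstall : ∀ i : Fin r, i ∈ (p1 :: L').map Prod.fst :=
    fun i => mem_flat_inl.mp (by rw [← hL]; exact hall2 _)
  have hsndall : ∀ j : Fin r, j ∈ (p1 :: L').map Prod.snd :=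
    fun j => mem_flat_inr.mp (by rw [← hL]; exact hall2 _)
  have hflatlen : ((p1 :: L').flatMap (pairF (r := r))).length = 2 * (p1 :: L').length := by
    clear hL hchfull HmemL HchL HlastL hfstnd hsndnd hfstall hsndall
    induction (p1 :: L') with
    | nil => simp
    | cons q M ih => simp [pairF] at ih ⊢; omega
  have hL'ne : L' ≠ [] := by
    intro hcon
    subst hcon
    have hlen2 := congrArg List.length hL
    simp [pairF] at hlen2
    simp only [List.length_cons] at hcard
    omega
  have hchne : List.Chain' (fun p q : Fin r × Fin r => p.1 ≠ q.1) (p1 :: L') := by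
    rw [List.Chain', ← List.isChain_map (f := (Prod.fst : Fin r × Fin r → Fin r))]
    exact List.Pairwise.isChain hfstnd
  have hlastne : ∀ h : (p1 :: L') ≠ [], (((p1 :: L').getLast h).1 ≠ i₀) := by
    intro h hcon
    have hglm : ((p1 :: L').getLast h) ∈ L' := by
      rw [List.getLast_cons hL'ne]
      exact List.getLast_mem hL'ne
    have : i₀ ∈ L'.map Prod.fst := by
      rw [← hcon]
      exact List.mem_map_of_mem hglm
    rw [List.map_cons, List.nodup_cons, hp1] at hfstnd
    exact hfstnd.1 this
  have hfacts := cyc3_mem i₀ (p1 :: L') HmemL HchL HlastL hchne hlastne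
  have hglnd := glist_nodup i₀ (p1 :: L') hfacts hfstnd hsndnd
  have hglcov := glist_cover i₀ (p1 :: L') hfacts hdeg hfstall hsndall
  have hglch := chain_blocks i₀ (p1 :: L') hfacts
  obtain ⟨k0, t0rest, ht0⟩ : ∃ k0 t0rest, cyc3 i₀ (p1 :: L')
      = (p1.1, p1.2, k0) :: t0rest := by
    cases L' with
    | nil => exact ⟨i₀, _, rfl⟩
    | cons q' L'' => exact ⟨q'.1, _, rfl⟩
  obtain ⟨bl0, hbl0⟩ := blockF_head' (E := E) (p1.1, p1.2, k0)
  have hgldecomp : (cyc3 i₀ (p1 :: L')).flatMap (blockF E)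
      = Xv i₀ :: (bl0 ++ t0rest.flatMap (blockF E)) := by
    rw [ht0, List.flatMap_cons, hbl0, hp1]
    simp
  have hgllen : 4 ≤ ((cyc3 i₀ (p1 :: L')).flatMap (blockF E)).length := by
    rw [ht0, List.flatMap_cons, List.length_append]
    have := blockF_len (E := E) (p1.1, p1.2, k0)
    omega
  obtain ⟨c, l3, hc3⟩ : ∃ c l3, bl0 ++ t0rest.flatMap (blockF E) = c :: l3 ∧ l3 ≠ [] := by
    rcases hbb : bl0 ++ t0rest.flatMap (blockF E) with _ | ⟨c, l3⟩
    · rw [hgldecomp, hbb] at hgllen; simp at hgllen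
    · refine ⟨c, l3, rfl, ?_⟩
      intro hcon
      subst hcon
      rw [hgldecomp, hbb] at hgllen
      simp at hgllen
  obtain ⟨hc3a, hc3b⟩ := hc3
  rw [hc3a] at hgldecomp
  refine ham_of_list (Xv i₀) c l3 ?_ ?_ hc3b ?_
  · rw [← hgldecomp]; exact hglnd
  · intro v; rw [← hgldecomp]; exact hglcov v
  · have : (cyc3 i₀ (p1 :: L')).flatMap (blockF E) ++ [Xv i₀]
        = Xv i₀ :: c :: (l3 ++ [Xv i₀]) := by
      rw [hgldecomp]; simp
    rw [← this]
    exact hglch
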